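/- Let G=(V,E) be a connected bipartite graph, t ≥ 2 an integer, x, y, z ∈ V and w, w' ∈ V^t such that w = z^{j-1} x x_{j+1} ⋯ x_t, w' = z^{j-1} y y_{j+1} ⋯ y_t, 1 ≤ j ≤ t−1 and x ≠ y. Then d_{S(G,t)}(w, w') = λ(x,y) + (2^{t-j+1} − 1)·d_G(x,y) − 2(2^{t-j} − 1), where λ(x,y) = min_{P_i ∈ 𝒫(x,y)} { d_{S(G,t-j)}( (x^{(i)})^{t-j}, x_{j+1}⋯x_t ) + d_{S(G,t-j)}( (y^{(i)})^{t-j}, y_{j+1}⋯y_t ) }. -/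

import Mathlib

/-- The generalized Sierpiński graph `S(G,t)` of a base graph `G`: vertices are words of
length `t` over the vertex set (encoded as `Fin t → V`); two words are adjacent iff they are
of the form `w x y^{d-1}` and `w y x^{d-1}` for some edge `{x,y}` of `G`. -/
def SierpinskiGraph {V : Type*} (G : SimpleGraph V) (t : ℕ) : SimpleGraph (Fin t → V) where
  Adj u v := ∃ i : Fin t, G.Adj (u i) (v i) ∧
      (∀ j : Fin t, j < i → u j = v j) ∧
      (∀ j : Fin t, i < j → u j = v i ∧ v j = u i)
  symm := by
    refine ⟨?_⟩
    rintro u v ⟨i, h1, h2, h3⟩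
    exact ⟨i, h1.symm, fun j hj => (h2 j hj).symm, fun j hj => ⟨(h3 j hj).2, (h3 j hj).1⟩⟩
  loopless := by
    refine ⟨?_⟩
    rintro u ⟨i, h1, -, -⟩
    exact G.loopless.irrefl _ h1


namespace Sier
variable {V : Type*} {G : SimpleGraph V}

lemma adj_cons_iff {n : ℕ} {a b : V} {T T' : Fin n → V} :
    (SierpinskiGraph G (n+1)).Adj (Fin.cons a T) (Fin.cons b T') ↔
    (a = b ∧ (SierpinskiGraph G n).Adj T T') ∨
    (G.Adj a b ∧ T = (fun _ => b) ∧ T' = (fun _ => a)) := by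
  constructor
  · rintro ⟨i, h1, h2, h3⟩
    rcases Fin.eq_zero_or_eq_succ i with rfl | ⟨i0, rfl⟩
    · refine Or.inr ⟨by simpa using h1, ?_, ?_⟩
      · funext k
        have := (h3 k.succ (Fin.succ_pos k)).1
        simpa using this
      · funext k
        have := (h3 k.succ (Fin.succ_pos k)).2
        simpa using this
    · refine Or.inl ⟨?_, ⟨i0, by simpa using h1, ?_, ?_⟩⟩
      · have := h2 0 (Fin.succ_pos i0)
        simpa using this
      · intro l hl
        have := h2 l.succ (by simpa [Fin.succ_lt_succ_iff] using hl)
        simpa using this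
      · intro l hl
        have := h3 l.succ (by simpa [Fin.succ_lt_succ_iff] using hl)
        simpa using this
  · rintro (⟨rfl, ⟨i, h1, h2, h3⟩⟩ | ⟨h1, rfl, rfl⟩)
    · refine ⟨i.succ, by simpa using h1, ?_, ?_⟩
      · intro j hj
        rcases Fin.eq_zero_or_eq_succ j with rfl | ⟨j0, rfl⟩
        · simp
        · have : j0 < i := by simpa [Fin.succ_lt_succ_iff] using hj
          simpa using h2 j0 this
      · intro j hj
        rcases Fin.eq_zero_or_eq_succ j with rfl | ⟨j0, rfl⟩
        · exact absurd hj (by simp [Fin.lt_iff_val_lt_val])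
        · have : i < j0 := by simpa [Fin.succ_lt_succ_iff] using hj
          simpa using h3 j0 this
    · refine ⟨0, by simpa using h1, ?_, ?_⟩
      · intro j hj
        exact absurd hj (by simp [Fin.lt_iff_val_lt_val])
      · intro j hj
        rcases Fin.eq_zero_or_eq_succ j with rfl | ⟨j0, rfl⟩
        · simp at hj
        · simp

lemma adj_iff {n : ℕ} {u v : Fin (n+1) → V} :
    (SierpinskiGraph G (n+1)).Adj u v ↔
    (u 0 = v 0 ∧ (SierpinskiGraph G n).Adj (Fin.tail u) (Fin.tail v)) ∨
    (G.Adj (u 0) (v 0) ∧ Fin.tail u = (fun _ => v 0) ∧ Fin.tail v = (fun _ => u 0)) := by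
  conv_lhs => rw [← Fin.cons_self_tail u, ← Fin.cons_self_tail v]
  rw [adj_cons_iff]

end Sier

namespace Sier
variable {V : Type*} {G : SimpleGraph V}

def liftWalk {n : ℕ} (a : V) : ∀ {T T' : Fin n → V}, (SierpinskiGraph G n).Walk T T' →
    (SierpinskiGraph G (n+1)).Walk (Fin.cons a T) (Fin.cons a T')
  | _, _, .nil => .nil
  | _, _, .cons h p => .cons (adj_cons_iff.mpr (Or.inl ⟨rfl, h⟩)) (liftWalk a p)

@[simp] lemma liftWalk_length {n : ℕ} (a : V) {T T' : Fin n → V}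
    (p : (SierpinskiGraph G n).Walk T T') : (liftWalk a p).length = p.length := by
  induction p with
  | nil => rfl
  | cons h p ih => simp [liftWalk, ih]

lemma cross_adj {n : ℕ} {a b : V} (h : G.Adj a b) :
    (SierpinskiGraph G (n+1)).Adj (Fin.cons a (fun _ => b)) (Fin.cons b (fun _ => a)) :=
  adj_cons_iff.mpr (Or.inr ⟨h, rfl, rfl⟩)

lemma cons_const (a : V) {n : ℕ} : (Fin.cons a (fun _ => a) : Fin (n+1) → V) = fun _ => a := by
  funext i
  refine Fin.cases ?_ ?_ i <;> simp

lemma exists_walk_const_adj (n : ℕ) {a b : V} (h : G.Adj a b) :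
    ∃ p : (SierpinskiGraph G n).Walk (fun _ => a) (fun _ => b), p.length = 2^n - 1 := by
  induction n with
  | zero =>
    have he : (fun _ => a : Fin 0 → V) = fun _ => b := funext fun i => i.elim0
    exact ⟨SimpleGraph.Walk.nil.copy rfl he, by simp⟩
  | succ n ih =>
    obtain ⟨p1, hp1⟩ := ih
    refine ⟨(((liftWalk a p1).append
      (SimpleGraph.Walk.cons (cross_adj h) (liftWalk b p1))).copy
        (cons_const a) (cons_const b)), ?_⟩
    have h1 : 1 ≤ 2^n := Nat.one_le_two_pow
    simp [hp1, pow_succ]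
    omega

lemma exists_walk_const (n : ℕ) {a b : V} (W : G.Walk a b) :
    ∃ p : (SierpinskiGraph G n).Walk (fun _ => a) (fun _ => b),
      p.length = (2^n - 1) * W.length := by
  induction W with
  | nil => exact ⟨.nil, by simp⟩
  | cons h W ih =>
    obtain ⟨p1, hp1⟩ := exists_walk_const_adj n h
    obtain ⟨p2, hp2⟩ := ih
    exact ⟨p1.append p2, by simp [hp1, hp2, Nat.mul_succ]; omega⟩

lemma sier_reachable (hc : G.Connected) : ∀ (n : ℕ) (u v : Fin n → V),
    (SierpinskiGraph G n).Reachable u v := by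
  intro n
  induction n with
  | zero =>
    intro u v
    have : u = v := funext fun i => i.elim0
    exact this ▸ SimpleGraph.Reachable.refl u
  | succ n ih =>
    have aux : ∀ {a b : V} (_ : G.Walk a b) (T T' : Fin n → V),
        (SierpinskiGraph G (n+1)).Reachable (Fin.cons a T) (Fin.cons b T') := by
      intro a b W
      induction W with
      | nil =>
        intro T T'
        obtain ⟨p⟩ := ih T T'
        exact ⟨liftWalk _ p⟩
      | @cons a c b h W ihW =>
        intro T T'
        have r1 : (SierpinskiGraph G (n+1)).Reachable (Fin.cons a T) (Fin.cons a (fun _ => c)) := by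
          obtain ⟨p⟩ := ih T (fun _ => c); exact ⟨liftWalk _ p⟩
        exact (r1.trans ⟨SimpleGraph.Walk.cons (cross_adj h) .nil⟩).trans (ihW _ _)
    intro u v
    rw [← Fin.cons_self_tail u, ← Fin.cons_self_tail v]
    obtain ⟨W⟩ := hc.preconnected (u 0) (v 0)
    exact aux W _ _

lemma sier_connected (hc : G.Connected) (n : ℕ) : (SierpinskiGraph G n).Connected := by
  have : Nonempty V := hc.nonempty
  exact SimpleGraph.Connected.mk (sier_reachable hc n)

variable (G) in
noncomputable def pot (a : V) : ∀ (n : ℕ), (Fin n → V) → ℕ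
  | 0, _ => 0
  | n+1, u => 2^n * G.dist a (u 0) + pot a n (Fin.tail u)

@[simp] lemma pot_const (a b : V) (n : ℕ) :
    pot G a n (fun _ => b : Fin n → V) = (2^n - 1) * G.dist a b := by
  induction n with
  | zero => simp [pot]
  | succ n ih =>
    show 2^n * G.dist a b + pot G a n (Fin.tail (fun _ => b)) = _
    have h1 : 1 ≤ 2^n := Nat.one_le_two_pow
    have ht : Fin.tail (fun _ => b : Fin (n+1) → V) = (fun _ => b) := rfl
    rw [ht, ih, pow_succ]
    have h2 : 2^n*2 - 1 = 2^n + (2^n - 1) := by omega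
    rw [h2, Nat.add_mul]

lemma pot_lipschitz (hc : G.Connected) {a : V} : ∀ {n : ℕ} {u v : Fin n → V},
    (SierpinskiGraph G n).Adj u v → pot G a n u ≤ pot G a n v + 1 := by
  intro n
  induction n with
  | zero => rintro u v ⟨i, -⟩; exact i.elim0
  | succ n ih =>
    intro u v huv
    rcases adj_iff.mp huv with ⟨h0, ht⟩ | ⟨h0, htu, htv⟩
    · show 2^n * G.dist a (u 0) + pot G a n (Fin.tail u) ≤ 2^n * G.dist a (v 0) + pot G a n (Fin.tail v) + 1
      rw [h0]
      have := ih ht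
      omega
    · show 2^n * G.dist a (u 0) + pot G a n (Fin.tail u) ≤ 2^n * G.dist a (v 0) + pot G a n (Fin.tail v) + 1
      rw [htu, htv, pot_const, pot_const]
      have hd : G.dist (u 0) (v 0) = 1 := SimpleGraph.dist_eq_one_iff_adj.mpr h0
      have t1 : G.dist a (u 0) ≤ G.dist a (v 0) + 1 := by
        have := hc.dist_triangle (u := a) (v := v 0) (w := u 0)
        rw [SimpleGraph.dist_comm (u := v 0)] at this
        omega
      have t2 : G.dist a (v 0) ≤ G.dist a (u 0) + 1 := by
        have := hc.dist_triangle (u := a) (v := u 0) (w := v 0)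
        omega
      have h1 : 1 ≤ 2^n := Nat.one_le_two_pow
      set p := G.dist a (u 0)
      set q := G.dist a (v 0)
      have e1 : 2^n * p + (2^n - 1) * q + q = 2^n * q + (2^n - 1) * p + p := by
        rw [Nat.sub_mul, Nat.sub_mul]
        have : q ≤ 2^n * q := Nat.le_mul_of_pos_left _ (by omega)
        have : p ≤ 2^n * p := Nat.le_mul_of_pos_left _ (by omega)
        omega
      omega

lemma lips_walk {n : ℕ} (f : (Fin n → V) → ℕ)
    (hf : ∀ u v, (SierpinskiGraph G n).Adj u v → f u ≤ f v + 1) :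
    ∀ {u v : Fin n → V} (p : (SierpinskiGraph G n).Walk u v), f u ≤ f v + p.length := by
  intro u v p
  induction p with
  | nil => simp
  | cons h p ih =>
    have := hf _ _ h
    simp only [SimpleGraph.Walk.length_cons]
    omega

lemma lips_dist (hc : G.Connected) {n : ℕ} (f : (Fin n → V) → ℕ)
    (hf : ∀ u v, (SierpinskiGraph G n).Adj u v → f u ≤ f v + 1)
    (u v : Fin n → V) : f u ≤ f v + (SierpinskiGraph G n).dist u v := by
  obtain ⟨p, hp⟩ := (sier_reachable hc n u v).exists_walk_length_eq_dist
  simpa [hp] using lips_walk f hf p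

lemma pot_le_dist (hc : G.Connected) {n : ℕ} (a : V) (u v : Fin n → V) :
    pot G a n u ≤ pot G a n v + (SierpinskiGraph G n).dist u v :=
  lips_dist hc _ (fun _ _ h => pot_lipschitz hc h) u v

lemma extreme_dist (hc : G.Connected) (n : ℕ) (a b : V) :
    (SierpinskiGraph G n).dist (fun _ => a) (fun _ => b) = (2^n - 1) * G.dist a b := by
  apply le_antisymm
  · obtain ⟨W, hW⟩ := hc.exists_walk_length_eq_dist a b
    obtain ⟨p, hp⟩ := exists_walk_const n W
    have := SimpleGraph.dist_le p
    rw [hW] at hp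
    omega
  · have := pot_le_dist hc b (fun _ => a : Fin n → V) (fun _ => b)
    simpa [SimpleGraph.dist_comm (u := b) (v := a), SimpleGraph.dist_self] using this

end Sier

namespace Sier
variable {V : Type*} {G : SimpleGraph V}

lemma pot_cons (a c : V) {n : ℕ} (T : Fin n → V) :
    pot G a (n+1) (Fin.cons c T) = 2^n * G.dist a c + pot G a n T := by
  simp [pot, Fin.tail_cons]

variable (G) in
def elemSet (z : V) {n : ℕ} (W0 : Fin n → V) (u : Fin (n+1) → V) : Set ℕ :=
  {c | ∃ b : V, c = Nat.dist (pot G b (n+1) u) (pot G b (n+1) (Fin.cons b (fun _ => z)))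
      + 1 + (SierpinskiGraph G n).dist (fun _ => b) W0}

open scoped Classical in
variable (G) in
noncomputable def gfun (z : V) {n : ℕ} (W0 : Fin n → V) (u : Fin (n+1) → V) : ℕ :=
  if u 0 = z then (SierpinskiGraph G n).dist (Fin.tail u) W0
  else sInf (elemSet G z W0 u)

lemma elemSet_nonempty (hne : Nonempty V) {z : V} {n : ℕ} {W0 : Fin n → V}
    {u : Fin (n+1) → V} : (elemSet G z W0 u).Nonempty := by
  obtain ⟨b⟩ := hne
  exact ⟨_, b, rfl⟩

lemma elem_mono (hc : G.Connected) {n : ℕ} {u v : Fin (n+1) → V}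
    (huv : (SierpinskiGraph G (n+1)).Adj u v) (b : V) (K : ℕ) :
    Nat.dist (pot G b (n+1) u) K ≤ Nat.dist (pot G b (n+1) v) K + 1 := by
  have h1 := pot_lipschitz hc huv (a := b)
  have h2 := pot_lipschitz hc huv.symm (a := b)
  simp only [Nat.dist] at *
  omega

lemma gfun_lipschitz (hc : G.Connected) (z : V) {n : ℕ} (W0 : Fin n → V) :
    ∀ u v, (SierpinskiGraph G (n+1)).Adj u v →
      gfun G z W0 u ≤ gfun G z W0 v + 1 := by
  have hVne : Nonempty V := hc.nonempty
  have hSc := sier_connected hc n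
  intro u v huv
  by_cases hz : u 0 = z <;> by_cases hz2 : v 0 = z
  · -- both heads z : inner edge
    rw [gfun, gfun, if_pos hz, if_pos hz2]
    rcases adj_iff.mp huv with ⟨h0, ht⟩ | ⟨h0, -, -⟩
    · have htri := hSc.dist_triangle (u := Fin.tail u) (v := Fin.tail v) (w := W0)
      have h1 : (SierpinskiGraph G n).dist (Fin.tail u) (Fin.tail v) = 1 :=
        SimpleGraph.dist_eq_one_iff_adj.mpr ht
      omega
    · rw [hz, hz2] at h0
      exact absurd h0 (G.loopless.irrefl z)
  · -- exit edge : u in copy z, v outside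
    rw [gfun, gfun, if_pos hz, if_neg hz2]
    rcases adj_iff.mp huv with ⟨h0, -⟩ | ⟨h0, htu, htv⟩
    · exact absurd (h0 ▸ hz) hz2
    obtain ⟨c, ⟨b', hb'⟩, hc'⟩ :
        ∃ c ∈ elemSet G z W0 v, sInf (elemSet G z W0 v) = c := by
      have hne := elemSet_nonempty (G := G) hVne (z := z) (W0 := W0) (u := v)
      exact ⟨_, Nat.sInf_mem hne, rfl⟩
    rw [hc']
    -- compute pot values
    have hv : v = Fin.cons (v 0) (fun _ => z) := by
      conv_lhs => rw [← Fin.cons_self_tail v]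
      rw [htv, hz]
    have e1 : pot G b' (n+1) v = 2^n * G.dist b' (v 0) + (2^n - 1) * G.dist b' z := by
      rw [hv, pot_cons, pot_const]
      simp
    have e2 : pot G b' (n+1) (Fin.cons b' (fun _ => z)) = (2^n - 1) * G.dist b' z := by
      rw [pot_cons, pot_const, SimpleGraph.dist_self]; ring
    have e3 : Nat.dist (pot G b' (n+1) v) (pot G b' (n+1) (Fin.cons b' (fun _ => z)))
        = 2^n * G.dist b' (v 0) := by
      rw [e1, e2]; simp [Nat.dist]
    have htri := hSc.dist_triangle (u := Fin.tail u) (v := (fun _ => b' : Fin n → V)) (w := W0)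
    have h4 : (SierpinskiGraph G n).dist (Fin.tail u) (fun _ => b')
        = (2^n - 1) * G.dist (v 0) b' := by
      rw [htu]; exact extreme_dist hc n (v 0) b'
    have h5 : (2^n - 1) * G.dist (v 0) b' ≤ 2^n * G.dist b' (v 0) := by
      have h0' : (1:ℕ) ≤ 2^n := Nat.one_le_two_pow
      have h1 : (2^n - 1) ≤ 2^n := by omega
      rw [SimpleGraph.dist_comm (u := v 0)]
      exact Nat.mul_le_mul h1 le_rfl
    rw [hb', e3]
    calc (SierpinskiGraph G n).dist (Fin.tail u) W0
        ≤ (2^n - 1) * G.dist (v 0) b' + (SierpinskiGraph G n).dist (fun _ => b') W0 := by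
          rw [← h4]; exact htri
      _ ≤ 2^n * G.dist b' (v 0) + (SierpinskiGraph G n).dist (fun _ => b') W0 :=
          Nat.add_le_add_right h5 _
      _ ≤ 2^n * G.dist b' (v 0) + 1 + (SierpinskiGraph G n).dist (fun _ => b') W0 + 1 := by
          omega
  · -- entry edge : u outside, v in copy z
    rw [gfun, gfun, if_neg hz, if_pos hz2]
    rcases adj_iff.mp huv with ⟨h0, -⟩ | ⟨h0, htu, htv⟩
    · exact absurd (h0.symm ▸ hz2) hz
    have hu : u = Fin.cons (u 0) (fun _ => z) := by
      conv_lhs => rw [← Fin.cons_self_tail u]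
      rw [htu, hz2]
    have hmem : Nat.dist (pot G (u 0) (n+1) u)
          (pot G (u 0) (n+1) (Fin.cons (u 0) (fun _ => z)))
        + 1 + (SierpinskiGraph G n).dist (fun _ => u 0) W0 ∈ elemSet G z W0 u :=
      ⟨u 0, rfl⟩
    have h6 := Nat.sInf_le hmem
    have e3 : Nat.dist (pot G (u 0) (n+1) u)
        (pot G (u 0) (n+1) (Fin.cons (u 0) (fun _ => z))) = 0 := by
      rw [← hu]; simp [Nat.dist]
    rw [e3] at h6
    have h7 : (SierpinskiGraph G n).dist (Fin.tail v) W0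
        = (SierpinskiGraph G n).dist (fun _ => u 0) W0 := by rw [htv]
    omega
  · -- both outside
    rw [gfun, gfun, if_neg hz, if_neg hz2]
    obtain ⟨c, ⟨b', hb'⟩, hc'⟩ :
        ∃ c ∈ elemSet G z W0 v, sInf (elemSet G z W0 v) = c := by
      have hne := elemSet_nonempty (G := G) hVne (z := z) (W0 := W0) (u := v)
      exact ⟨_, Nat.sInf_mem hne, rfl⟩
    have hmem : Nat.dist (pot G b' (n+1) u) (pot G b' (n+1) (Fin.cons b' (fun _ => z)))
        + 1 + (SierpinskiGraph G n).dist (fun _ => b') W0 ∈ elemSet G z W0 u := ⟨b', rfl⟩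
    have h6 := Nat.sInf_le hmem
    have h7 := elem_mono hc huv b' (pot G b' (n+1) (Fin.cons b' (fun _ => z)))
    rw [hc', hb']
    omega

lemma peel_dist (hc : G.Connected) (z : V) {n : ℕ} (T T' : Fin n → V) :
    (SierpinskiGraph G (n+1)).dist (Fin.cons z T) (Fin.cons z T')
      = (SierpinskiGraph G n).dist T T' := by
  apply le_antisymm
  · obtain ⟨p, hp⟩ := (sier_reachable hc n T T').exists_walk_length_eq_dist
    have := SimpleGraph.dist_le (liftWalk z p)
    simpa [hp] using this
  · have := lips_dist hc (gfun G z T') (gfun_lipschitz hc z T')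
      (Fin.cons z T) (Fin.cons z T')
    have e1 : gfun G z T' (Fin.cons z T) = (SierpinskiGraph G n).dist T T' := by
      rw [gfun, if_pos (by simp), Fin.tail_cons]
    have e2 : gfun G z T' (Fin.cons z T') = 0 := by
      rw [gfun, if_pos (by simp), Fin.tail_cons, SimpleGraph.dist_self]
    omega

end Sier

namespace Sier
variable {V : Type*} {G : SimpleGraph V}

lemma walk_parity (C : G.Coloring (Fin 2)) {a b : V} (p : G.Walk a b) :
    (p.length : ZMod 2) = ((C a).val : ZMod 2) - ((C b).val : ZMod 2) := by
  induction p with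
  | nil => simp
  | @cons u v w h p ih =>
    have hne : C u ≠ C v := C.valid h
    have h2 : ∀ i j : Fin 2, i ≠ j → ((i.val : ZMod 2)) - (j.val : ZMod 2) = 1 := by decide
    simp only [SimpleGraph.Walk.length_cons]
    push_cast
    rw [ih, ← h2 _ _ hne]
    ring

lemma dist_parity (hc : G.Connected) (C : G.Coloring (Fin 2)) (a b : V) :
    ((G.dist a b : ZMod 2)) = ((C a).val : ZMod 2) - ((C b).val : ZMod 2) := by
  obtain ⟨p, hp⟩ := hc.exists_walk_length_eq_dist a b
  rw [← hp]; exact walk_parity C p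

lemma dist_step (hc : G.Connected) (C : G.Coloring (Fin 2)) {u v : V} (h : G.Adj u v)
    (a : V) : G.dist a v = G.dist a u + 1 ∨ G.dist a u = G.dist a v + 1 := by
  have t1 := hc.dist_triangle (u := a) (v := u) (w := v)
  have t2 := hc.dist_triangle (u := a) (v := v) (w := u)
  have h1 : G.dist u v = 1 := SimpleGraph.dist_eq_one_iff_adj.mpr h
  have h2 : G.dist v u = 1 := SimpleGraph.dist_eq_one_iff_adj.mpr h.symm
  have hne : G.dist a u ≠ G.dist a v := by
    intro he
    have p1 := dist_parity hc C a u
    have p2 := dist_parity hc C a v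
    have hcast : ((G.dist a u : ℕ) : ZMod 2) = ((G.dist a v : ℕ) : ZMod 2) := by rw [he]
    rw [p1, p2] at hcast
    have : ((C u).val : ZMod 2) = ((C v).val : ZMod 2) := sub_right_injective hcast
    have hval : C u = C v := by
      have h4 : ∀ i j : Fin 2, ((i.val : ZMod 2)) = (j.val : ZMod 2) → i = j := by decide
      exact h4 _ _ this
    exact C.valid h hval
  omega

lemma dist_two_of_common (hc : G.Connected) (C : G.Coloring (Fin 2)) {a b c : V}
    (hab : G.Adj a b) (hac : G.Adj a c) (hbc : b ≠ c) : G.dist b c = 2 := by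
  have hnadj : ¬ G.Adj b c := by
    intro h
    have h1 : C b ≠ C a := (C.valid hab).symm
    have h2 : C c ≠ C a := (C.valid hac).symm
    have h3 : C b = C c := by
      have : ∀ i j k : Fin 2, i ≠ k → j ≠ k → i = j := by decide
      exact this _ _ _ h1 h2
    exact C.valid h h3
  have t1 := hc.dist_triangle (u := b) (v := a) (w := c)
  have h1 : G.dist b a = 1 := SimpleGraph.dist_eq_one_iff_adj.mpr hab.symm
  have h2 : G.dist a c = 1 := SimpleGraph.dist_eq_one_iff_adj.mpr hac
  have hne : G.dist b c ≠ 0 := by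
    intro h
    exact hbc ((SimpleGraph.Connected.dist_eq_zero_iff hc).mp h)
  have hne1 : G.dist b c ≠ 1 := by
    intro h
    exact hnadj (SimpleGraph.dist_eq_one_iff_adj.mp h)
  omega

end Sier

namespace Sier
variable {V : Type*} {G : SimpleGraph V}

lemma dist_getVert_le (hc : G.Connected) {a b : V} (q : G.Walk a b) (i : ℕ) :
    G.dist a (q.getVert i) ≤ i := by
  induction i with
  | zero => simp [q.getVert_zero, SimpleGraph.dist_self]
  | succ i ih =>
    by_cases hi : i < q.length
    · have hadj := q.adj_getVert_succ hi
      have htri := hc.dist_triangle (u := a) (v := q.getVert i) (w := q.getVert (i+1))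
      have h1 : G.dist (q.getVert i) (q.getVert (i+1)) = 1 :=
        SimpleGraph.dist_eq_one_iff_adj.mpr hadj
      omega
    · have h1 : q.getVert (i+1) = q.getVert i := by
        rw [q.getVert_of_length_le (by omega), q.getVert_of_length_le (by omega)]
      rw [h1]; omega

lemma dist_getVert_end_le (hc : G.Connected) {a b : V} (q : G.Walk a b) {i : ℕ}
    (hi : i ≤ q.length) : G.dist (q.getVert i) b ≤ q.length - i := by
  have h1 := dist_getVert_le hc q.reverse (q.length - i)
  rw [q.getVert_reverse] at h1
  have h2 : q.length - (q.length - i) = i := by omega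
  rw [h2] at h1
  rw [SimpleGraph.dist_comm]
  simpa using h1

lemma geodesic_getVert (hc : G.Connected) {c y : V} (q : G.Walk c y)
    (hq : q.length = G.dist c y) {i : ℕ} (hi : i ≤ q.length) :
    G.dist (q.getVert i) y = q.length - i := by
  have h1 := dist_getVert_le hc q i
  have h2 := dist_getVert_end_le hc q hi
  have h3 := hc.dist_triangle (u := c) (v := q.getVert i) (w := y)
  omega

lemma not_mem_support_of_dist_gt (hc : G.Connected) {a y c : V} (q : G.Walk a y)
    (hq : q.length = G.dist a y) (hd : q.length < G.dist c y) : c ∉ q.support := by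
  intro hmem
  obtain ⟨r, s, rfl⟩ := SimpleGraph.Walk.mem_support_iff_exists_append.mp hmem
  have h1 : G.dist c y ≤ s.length := SimpleGraph.dist_le s
  have h2 := SimpleGraph.Walk.length_append r s
  omega

variable (G) in
def lamSet (y : V) {m : ℕ} (Y : Fin m → V) (c : V) (T : Fin m → V) : Set ℕ :=
  {d | ∃ q : G.Walk c y, q.IsPath ∧ q.length = G.dist c y ∧
      d = (SierpinskiGraph G m).dist (fun _ => q.getVert 1) T
        + (SierpinskiGraph G m).dist (fun _ => q.getVert (q.length - 1)) Y}

variable (G) in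
noncomputable def lam (y : V) {m : ℕ} (Y : Fin m → V) (c : V) (T : Fin m → V) : ℕ :=
  sInf (lamSet G y Y c T)

lemma lamSet_nonempty (hc : G.Connected) (y : V) {m : ℕ} (Y : Fin m → V) (c : V)
    (T : Fin m → V) : (lamSet G y Y c T).Nonempty := by
  obtain ⟨q, hq1, hq2⟩ := hc.exists_path_of_dist c y
  exact ⟨_, q, hq1, hq2, rfl⟩

lemma lam_mem (hc : G.Connected) (y : V) {m : ℕ} (Y : Fin m → V) (c : V) (T : Fin m → V) :
    lam G y Y c T ∈ lamSet G y Y c T :=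
  Nat.sInf_mem (lamSet_nonempty hc y Y c T)

lemma lam_le (y : V) {m : ℕ} (Y : Fin m → V) (c : V) (T : Fin m → V)
    {d : ℕ} (hd : d ∈ lamSet G y Y c T) : lam G y Y c T ≤ d :=
  Nat.sInf_le hd

lemma lam_lipschitz (hc : G.Connected) (y : V) {m : ℕ} (Y : Fin m → V) (c : V)
    {T T' : Fin m → V} (h : (SierpinskiGraph G m).Adj T T') :
    lam G y Y c T ≤ lam G y Y c T' + 1 := by
  obtain ⟨q, hq1, hq2, hq3⟩ := lam_mem hc y Y c T'
  have hSc := sier_connected hc m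
  have htri := hSc.dist_triangle (u := (fun _ => q.getVert 1 : Fin m → V)) (v := T') (w := T)
  have h1 : (SierpinskiGraph G m).dist T' T = 1 :=
    SimpleGraph.dist_eq_one_iff_adj.mpr h.symm
  have hmem : (SierpinskiGraph G m).dist (fun _ => q.getVert 1) T
      + (SierpinskiGraph G m).dist (fun _ => q.getVert (q.length - 1)) Y
      ∈ lamSet G y Y c T := ⟨q, hq1, hq2, rfl⟩
  have := lam_le y Y c T hmem
  omega

/-- If `c` is adjacent to `y`, `lam` from the copy `c` with tail `y^m` is the distance
from `c^m` to `Y`. -/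
lemma lam_adj (hc : G.Connected) {m : ℕ} (Y : Fin m → V) {c y : V} (h : G.Adj c y) :
    lam G y Y c (fun _ => y) = (SierpinskiGraph G m).dist (fun _ => c) Y := by
  have hd : G.dist c y = 1 := SimpleGraph.dist_eq_one_iff_adj.mpr h
  have key : ∀ d ∈ lamSet G y Y c (fun _ => y),
      d = (SierpinskiGraph G m).dist (fun _ => c) Y := by
    rintro d ⟨q, hq1, hq2, rfl⟩
    rw [hd] at hq2
    have h1 : q.getVert 1 = y := by
      have := q.getVert_length
      rw [hq2] at this
      exact this
    have h0 : q.getVert (q.length - 1) = c := by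
      rw [hq2]
      exact q.getVert_zero
    rw [h1, h0, SimpleGraph.dist_self]
    omega
  obtain ⟨d, hd1, hd2⟩ : ∃ d ∈ lamSet G y Y c (fun _ => y), lam G y Y c (fun _ => y) = d :=
    ⟨_, lam_mem hc y Y c _, rfl⟩
  rw [hd2, key d hd1]

end Sier

namespace Sier
variable {V : Type*} {G : SimpleGraph V}

open scoped Classical in
variable (G) in
noncomputable def Ffun (y : V) {m : ℕ} (Y : Fin m → V) (u : Fin (m+1) → V) : ℕ :=
  if u 0 = y then (SierpinskiGraph G m).dist (Fin.tail u) Y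
  else lam G y Y (u 0) (Fin.tail u)
    + (2^(m+1) - 1) * (G.dist (u 0) y - 1) + 1

lemma lam_step_down (hc : G.Connected) (C : G.Coloring (Fin 2)) {m : ℕ} {y : V}
    (Y : Fin m → V) {c a : V} (hadj : G.Adj c a)
    (hca : G.dist c y = G.dist a y + 1) (hay : a ≠ y) :
    lam G y Y c (fun _ => a) + (2^(m+1) - 1) ≤ lam G y Y a (fun _ => c) + 1 := by
  obtain ⟨q', hq1, hq2, hval⟩ := lam_mem hc y Y a (fun _ => c : Fin m → V)
  have hka : 1 ≤ q'.length := by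
    have := hc.pos_dist_of_ne hay
    omega
  -- the extended walk
  have hnotmem : c ∉ q'.support := not_mem_support_of_dist_gt hc q' hq2 (by omega)
  have hqpath : (SimpleGraph.Walk.cons hadj q').IsPath := hq1.cons hnotmem
  have hqlen : (SimpleGraph.Walk.cons hadj q').length = G.dist c y := by
    simp [hq2, hca]
  have hmem : (SierpinskiGraph G m).dist
        (fun _ => (SimpleGraph.Walk.cons hadj q').getVert 1) (fun _ => a)
      + (SierpinskiGraph G m).dist
        (fun _ => (SimpleGraph.Walk.cons hadj q').getVert
          ((SimpleGraph.Walk.cons hadj q').length - 1)) Y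
      ∈ lamSet G y Y c (fun _ => a) := ⟨_, hqpath, hqlen, rfl⟩
  have hg1 : (SimpleGraph.Walk.cons hadj q').getVert 1 = a := by
    rw [SimpleGraph.Walk.getVert_cons_succ]
    exact q'.getVert_zero
  have hg2 : (SimpleGraph.Walk.cons hadj q').getVert
      ((SimpleGraph.Walk.cons hadj q').length - 1) = q'.getVert (q'.length - 1) := by
    have h1 : (SimpleGraph.Walk.cons hadj q').length - 1 = (q'.length - 1) + 1 := by
      simp only [SimpleGraph.Walk.length_cons]
      omega
    rw [h1, SimpleGraph.Walk.getVert_cons_succ]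
  rw [hg1, hg2] at hmem
  have hle := lam_le y Y c (fun _ => a : Fin m → V) hmem
  rw [SimpleGraph.dist_self (G := SierpinskiGraph G m)] at hle
  -- identify the first term of the minimizer for `a`
  have hu1a : G.Adj a (q'.getVert 1) := by
    have := q'.adj_getVert_succ (by omega : 0 < q'.length)
    rwa [q'.getVert_zero] at this
  have hu1c : q'.getVert 1 ≠ c := by
    intro h
    have := geodesic_getVert hc q' hq2 (by omega : 1 ≤ q'.length)
    rw [h] at this
    omega
  have hdist2 : G.dist (q'.getVert 1) c = 2 :=
    dist_two_of_common hc C hu1a hadj.symm hu1c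
  have hext : (SierpinskiGraph G m).dist (fun _ => q'.getVert 1) (fun _ => c)
      = (2^m - 1) * 2 := by
    rw [extreme_dist hc m, hdist2]
  rw [hext] at hval
  have h2m : (1:ℕ) ≤ 2^m := Nat.one_le_two_pow
  have hp : (2:ℕ)^(m+1) = 2 * 2^m := by rw [pow_succ]; ring
  rw [hval, hp]
  omega

lemma lam_step_up (hc : G.Connected) (C : G.Coloring (Fin 2)) {m : ℕ} {y : V}
    (Y : Fin m → V) {c a : V} (hadj : G.Adj c a)
    (hca : G.dist a y = G.dist c y + 1) (hcy : c ≠ y) :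
    lam G y Y c (fun _ => a) ≤ lam G y Y a (fun _ => c) + 2^(m+1) := by
  have hSc := sier_connected hc m
  have h2m : (1:ℕ) ≤ 2^m := Nat.one_le_two_pow
  have hp : (2:ℕ)^(m+1) = 2 * 2^m := by rw [pow_succ]; ring
  have hkc : 1 ≤ G.dist c y := hc.pos_dist_of_ne hcy
  obtain ⟨q, hq1, hq2, hval⟩ := lam_mem hc y Y a (fun _ => c : Fin m → V)
  have hka : q.length = G.dist c y + 1 := by rw [hq2, hca]
  -- decompose q
  cases q with
  | nil => simp at hka
  | @cons _ d _ h r =>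
    simp only [SimpleGraph.Walk.length_cons] at hka
    have hrlen : r.length = G.dist c y := by omega
    have hg1 : (SimpleGraph.Walk.cons h r).getVert 1 = d := by
      rw [SimpleGraph.Walk.getVert_cons_succ]
      exact r.getVert_zero
    have hg2 : (SimpleGraph.Walk.cons h r).getVert ((SimpleGraph.Walk.cons h r).length - 1)
        = r.getVert (r.length - 1) := by
      have h1 : (SimpleGraph.Walk.cons h r).length - 1 = (r.length - 1) + 1 := by
        simp only [SimpleGraph.Walk.length_cons]
        omega
      rw [h1, SimpleGraph.Walk.getVert_cons_succ]
    rw [hg1, hg2] at hval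
    -- the end vertex of q is adjacent to y
    have he_adj : G.Adj (r.getVert (r.length - 1)) y := by
      have h0 : r.length - 1 < r.length := by omega
      have := r.adj_getVert_succ h0
      have h1 : r.length - 1 + 1 = r.length := by omega
      rw [h1, r.getVert_length] at this
      exact this
    by_cases hd : d = c
    · -- the minimizer passes through c
      subst hd
      have hrdist : r.length = G.dist d y := hrlen
      have hrpath : r.IsPath := hq1.of_cons
      have hmem : (SierpinskiGraph G m).dist (fun _ => r.getVert 1) (fun _ => a)
          + (SierpinskiGraph G m).dist (fun _ => r.getVert (r.length - 1)) Y
          ∈ lamSet G y Y d (fun _ => a) := ⟨r, hrpath, hrdist, rfl⟩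
      have hle := lam_le y Y d (fun _ => a : Fin m → V) hmem
      -- first term ≤ 2(2^m - 1)
      have hr1d : G.Adj d (r.getVert 1) := by
        have := r.adj_getVert_succ (by omega : 0 < r.length)
        rwa [r.getVert_zero] at this
      have hdist : G.dist (r.getVert 1) a ≤ 2 := by
        have t := hc.dist_triangle (u := r.getVert 1) (v := d) (w := a)
        have e1 : G.dist (r.getVert 1) d = 1 := SimpleGraph.dist_eq_one_iff_adj.mpr hr1d.symm
        have e2 : G.dist d a = 1 := SimpleGraph.dist_eq_one_iff_adj.mpr hadj
        omega
      have hext : (SierpinskiGraph G m).dist (fun _ => r.getVert 1) (fun _ => a)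
          ≤ (2^m - 1) * 2 := by
        rw [extreme_dist hc m]
        exact Nat.mul_le_mul_left _ hdist
      rw [hval, hp]
      omega
    · -- the minimizer starts away from c; use any geodesic from c
      obtain ⟨r', hr'path, hr'len⟩ := hc.exists_path_of_dist c y
      have hmem : (SierpinskiGraph G m).dist (fun _ => r'.getVert 1) (fun _ => a)
          + (SierpinskiGraph G m).dist (fun _ => r'.getVert (r'.length - 1)) Y
          ∈ lamSet G y Y c (fun _ => a) := ⟨r', hr'path, hr'len, rfl⟩
      have hle := lam_le y Y c (fun _ => a : Fin m → V) hmem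
      -- first term of r' ≤ 2(2^m-1)
      have hr1c : G.Adj c (r'.getVert 1) := by
        have := r'.adj_getVert_succ (by omega : 0 < r'.length)
        rwa [r'.getVert_zero] at this
      have hdist1 : G.dist (r'.getVert 1) a ≤ 2 := by
        have t := hc.dist_triangle (u := r'.getVert 1) (v := c) (w := a)
        have e1 : G.dist (r'.getVert 1) c = 1 := SimpleGraph.dist_eq_one_iff_adj.mpr hr1c.symm
        have e2 : G.dist c a = 1 := SimpleGraph.dist_eq_one_iff_adj.mpr hadj
        omega
      have hext1 : (SierpinskiGraph G m).dist (fun _ => r'.getVert 1) (fun _ => a)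
          ≤ (2^m - 1) * 2 := by
        rw [extreme_dist hc m]
        exact Nat.mul_le_mul_left _ hdist1
      -- second term of r' within 2(2^m-1) of that of q
      have hre_adj : G.Adj (r'.getVert (r'.length - 1)) y := by
        have h0 : r'.length - 1 < r'.length := by omega
        have := r'.adj_getVert_succ h0
        have h1 : r'.length - 1 + 1 = r'.length := by omega
        rw [h1, r'.getVert_length] at this
        exact this
      have hdist2 : G.dist (r'.getVert (r'.length - 1)) (r.getVert (r.length - 1)) ≤ 2 := by
        have t := hc.dist_triangle (u := r'.getVert (r'.length - 1)) (v := y)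
          (w := r.getVert (r.length - 1))
        have e1 : G.dist (r'.getVert (r'.length - 1)) y = 1 :=
          SimpleGraph.dist_eq_one_iff_adj.mpr hre_adj
        have e2 : G.dist y (r.getVert (r.length - 1)) = 1 :=
          SimpleGraph.dist_eq_one_iff_adj.mpr he_adj.symm
        omega
      have hext2 : (SierpinskiGraph G m).dist (fun _ => r'.getVert (r'.length - 1)) Y
          ≤ (2^m - 1) * 2 + (SierpinskiGraph G m).dist (fun _ => r.getVert (r.length - 1)) Y := by
        have t := hSc.dist_triangle (u := (fun _ => r'.getVert (r'.length - 1) : Fin m → V))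
          (v := (fun _ => r.getVert (r.length - 1) : Fin m → V)) (w := Y)
        have e1 : (SierpinskiGraph G m).dist (fun _ => r'.getVert (r'.length - 1))
            (fun _ => r.getVert (r.length - 1)) ≤ (2^m - 1) * 2 := by
          rw [extreme_dist hc m]
          exact Nat.mul_le_mul_left _ hdist2
        omega
      -- first term of q equals 2(2^m-1)
      have hu1a : G.Adj a d := h
      have hdd : G.dist d c = 2 := dist_two_of_common hc C hu1a hadj.symm hd
      have hextq : (SierpinskiGraph G m).dist (fun _ => d) (fun _ => c) = (2^m - 1) * 2 := by
        rw [extreme_dist hc m, hdd]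
      rw [hval, hextq, hp]
      omega

end Sier

namespace Sier
variable {V : Type*} {G : SimpleGraph V}

lemma Ffun_lipschitz (hc : G.Connected) (C : G.Coloring (Fin 2)) (y : V) {m : ℕ}
    (Y : Fin m → V) : ∀ u v, (SierpinskiGraph G (m+1)).Adj u v →
      Ffun G y Y u ≤ Ffun G y Y v + 1 := by
  have hSc := sier_connected hc m
  have h2m : (1:ℕ) ≤ 2^m := Nat.one_le_two_pow
  have hp : (2:ℕ)^(m+1) = 2 * 2^m := by rw [pow_succ]; ring
  intro u v huv
  by_cases hz : u 0 = y <;> by_cases hz2 : v 0 = y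
  · -- both in copy y : inner edge
    rw [Ffun, Ffun, if_pos hz, if_pos hz2]
    rcases adj_iff.mp huv with ⟨h0, ht⟩ | ⟨h0, -, -⟩
    · have htri := hSc.dist_triangle (u := Fin.tail u) (v := Fin.tail v) (w := Y)
      have h1 : (SierpinskiGraph G m).dist (Fin.tail u) (Fin.tail v) = 1 :=
        SimpleGraph.dist_eq_one_iff_adj.mpr ht
      omega
    · rw [hz, hz2] at h0
      exact absurd h0 (G.loopless.irrefl y)
  · -- crossing from copy y
    rw [Ffun, Ffun, if_pos hz, if_neg hz2]
    rcases adj_iff.mp huv with ⟨h0, -⟩ | ⟨h0, htu, htv⟩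
    · exact absurd (h0 ▸ hz) hz2
    rw [hz] at h0 htv
    have hd1 : G.dist (v 0) y = 1 := SimpleGraph.dist_eq_one_iff_adj.mpr h0.symm
    rw [htu, htv, hd1, lam_adj hc Y h0.symm]
    omega
  · -- crossing into copy y
    rw [Ffun, Ffun, if_neg hz, if_pos hz2]
    rcases adj_iff.mp huv with ⟨h0, -⟩ | ⟨h0, htu, htv⟩
    · exact absurd (h0.symm ▸ hz2) hz
    rw [hz2] at h0 htu
    have hd1 : G.dist (u 0) y = 1 := SimpleGraph.dist_eq_one_iff_adj.mpr h0
    rw [htu, htv, hd1, lam_adj hc Y h0]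
    omega
  · -- both outside copy y
    rw [Ffun, Ffun, if_neg hz, if_neg hz2]
    have hku : 1 ≤ G.dist (u 0) y := hc.pos_dist_of_ne hz
    have hkv : 1 ≤ G.dist (v 0) y := hc.pos_dist_of_ne hz2
    rcases adj_iff.mp huv with ⟨h0, ht⟩ | ⟨h0, htu, htv⟩
    · rw [h0]
      have := lam_lipschitz hc y Y (v 0) ht
      omega
    · rcases dist_step hc C h0 y with hstep | hstep
      · -- dist (v0) y = dist (u0) y + 1 : moving away
        rw [SimpleGraph.dist_comm (u := y) (v := u 0),
            SimpleGraph.dist_comm (u := y) (v := v 0)] at hstep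
        have hlam := lam_step_up hc C Y h0 hstep hz
        rw [htu, htv, hstep]
        have e1 : G.dist (u 0) y + 1 - 1 = (G.dist (u 0) y - 1) + 1 := by omega
        rw [e1, Nat.mul_succ]
        omega
      · -- dist (u0) y = dist (v0) y + 1 : moving closer
        rw [SimpleGraph.dist_comm (u := y) (v := u 0),
            SimpleGraph.dist_comm (u := y) (v := v 0)] at hstep
        have hlam := lam_step_down hc C Y h0 hstep hz2
        rw [htu, htv, hstep]
        have e1 : G.dist (v 0) y + 1 - 1 = (G.dist (v 0) y - 1) + 1 := by omega
        rw [e1, Nat.mul_succ]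
        omega

lemma core_lower (hc : G.Connected) (C : G.Coloring (Fin 2)) {m : ℕ} {x y : V}
    (hxy : x ≠ y) (X Y : Fin m → V) :
    lam G y Y x X + (2^(m+1) - 1) * (G.dist x y - 1) + 1
      ≤ (SierpinskiGraph G (m+1)).dist (Fin.cons x X) (Fin.cons y Y) := by
  have hl := lips_dist hc (Ffun G y Y) (Ffun_lipschitz hc C y Y)
    (Fin.cons x X) (Fin.cons y Y)
  have e1 : Ffun G y Y (Fin.cons x X)
      = lam G y Y x X + (2^(m+1) - 1) * (G.dist x y - 1) + 1 := by
    rw [Ffun, if_neg (by simpa using hxy)]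
    simp
  have e2 : Ffun G y Y (Fin.cons y Y) = 0 := by
    rw [Ffun, if_pos (by simp)]
    simp [SimpleGraph.dist_self]
  omega

end Sier

namespace Sier
variable {V : Type*} {G : SimpleGraph V}

lemma descend_walk (hc : G.Connected) {m : ℕ} {x y : V} (Y : Fin m → V)
    (q : G.Walk x y) :
    ∀ (j i : ℕ), i + j = q.length → 1 ≤ i →
    ∃ p : (SierpinskiGraph G (m+1)).Walk
        (Fin.cons (q.getVert i) (fun _ => q.getVert (i-1))) (Fin.cons y Y),
      p.length ≤ j * (2^(m+1) - 1)
        + (SierpinskiGraph G m).dist (fun _ => q.getVert (q.length - 1)) Y := by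
  have h2m : (1:ℕ) ≤ 2^m := Nat.one_le_two_pow
  have hp : (2:ℕ)^(m+1) = 2 * 2^m := by rw [pow_succ]; ring
  intro j
  induction j with
  | zero =>
    intro i hij hi
    have hi' : i = q.length := by omega
    subst hi'
    obtain ⟨p0, hp0⟩ := (sier_reachable hc m (fun _ => q.getVert (q.length - 1)) Y
      ).exists_walk_length_eq_dist
    refine ⟨(liftWalk (G := G) y p0).copy (by rw [q.getVert_length]) rfl, ?_⟩
    simp [hp0]
  | succ j ih =>
    intro i hij hi
    have hilt : i < q.length := by omega
    have adj1 : G.Adj (q.getVert (i-1)) (q.getVert i) := by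
      have := q.adj_getVert_succ (i := i - 1) (by omega)
      have h1 : i - 1 + 1 = i := by omega
      rwa [h1] at this
    have adj2 : G.Adj (q.getVert i) (q.getVert (i+1)) := q.adj_getVert_succ hilt
    obtain ⟨w1, hw1⟩ := exists_walk_const (G := G) m
      (SimpleGraph.Walk.cons adj1 (SimpleGraph.Walk.cons adj2 SimpleGraph.Walk.nil))
    obtain ⟨p', hp'⟩ := ih (i+1) (by omega) (by omega)
    refine ⟨(liftWalk (q.getVert i) w1).append
      (SimpleGraph.Walk.cons (cross_adj adj2) p'), ?_⟩
    have hl : ((liftWalk (q.getVert i) w1).append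
        (SimpleGraph.Walk.cons (cross_adj adj2) p')).length
        = w1.length + (1 + p'.length) := by
      simp [SimpleGraph.Walk.length_append]
      omega
    have hsucc : (j+1) * (2^(m+1) - 1) = j * (2^(m+1) - 1) + (2^(m+1) - 1) :=
      Nat.succ_mul _ _
    rw [hl, hw1, hsucc]
    simp only [SimpleGraph.Walk.length_cons, SimpleGraph.Walk.length_nil]
    have h2 : (2^m - 1) * (0+1+1) + 1 = 2^(m+1) - 1 := by rw [hp]; omega
    omega

lemma core_upper (hc : G.Connected) {m : ℕ} {x y : V} (hxy : x ≠ y)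
    (X Y : Fin m → V) :
    (SierpinskiGraph G (m+1)).dist (Fin.cons x X) (Fin.cons y Y)
      ≤ lam G y Y x X + (2^(m+1) - 1) * (G.dist x y - 1) + 1 := by
  obtain ⟨q, hq1, hq2, hval⟩ := lam_mem hc y Y x X
  have hk : 1 ≤ G.dist x y := hc.pos_dist_of_ne hxy
  have hlen : 1 ≤ q.length := by omega
  obtain ⟨p0, hp0⟩ := (sier_reachable hc m X (fun _ => q.getVert 1)
    ).exists_walk_length_eq_dist
  have hadj0 : G.Adj x (q.getVert 1) := by
    have := q.adj_getVert_succ (i := 0) (by omega)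
    rwa [q.getVert_zero] at this
  obtain ⟨p'0, hp'⟩ := descend_walk hc Y q (q.length - 1) 1 (by omega) le_rfl
  have hstart : (Fin.cons (q.getVert 1) (fun _ => q.getVert (1-1)) : Fin (m+1) → V)
      = Fin.cons (q.getVert 1) (fun _ => x) := by
    congr 1
    funext _
    simpa using q.getVert_zero
  let p' := p'0.copy hstart rfl
  have hp'len : p'.length = p'0.length := SimpleGraph.Walk.length_copy _ _ _
  have hW := SimpleGraph.dist_le ((liftWalk x p0).append
    (SimpleGraph.Walk.cons (cross_adj hadj0) p'))
  have hWlen : ((liftWalk x p0).append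
      (SimpleGraph.Walk.cons (cross_adj hadj0) p')).length
      = p0.length + (1 + p'0.length) := by
    simp [SimpleGraph.Walk.length_append, p', hp'len]
    omega
  rw [hWlen, hp0] at hW
  have hcomm : (SierpinskiGraph G m).dist X (fun _ => q.getVert 1)
      = (SierpinskiGraph G m).dist (fun _ => q.getVert 1) X :=
    SimpleGraph.dist_comm
  rw [hcomm] at hW
  have hmul2 : (q.length - 1) * (2^(m+1) - 1) = (2^(m+1) - 1) * (G.dist x y - 1) := by
    rw [hq2, Nat.mul_comm]
  omega

lemma core_cons (hc : G.Connected) (C : G.Coloring (Fin 2)) {m : ℕ} {x y : V}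
    (hxy : x ≠ y) (X Y : Fin m → V) :
    (SierpinskiGraph G (m+1)).dist (Fin.cons x X) (Fin.cons y Y)
      = lam G y Y x X + (2^(m+1) - 1) * G.dist x y - 2 * (2^m - 1) := by
  have hk : 1 ≤ G.dist x y := hc.pos_dist_of_ne hxy
  have h2m : (1:ℕ) ≤ 2^m := Nat.one_le_two_pow
  have hp : (2:ℕ)^(m+1) = 2 * 2^m := by rw [pow_succ]; ring
  have hmul : (2^(m+1) - 1) * G.dist x y
      = (2^(m+1) - 1) * (G.dist x y - 1) + (2^(m+1) - 1) := by
    conv_lhs => rw [show G.dist x y = (G.dist x y - 1) + 1 by omega]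
    rw [Nat.mul_succ]
  have h1 := core_lower hc C hxy X Y
  have h2 := core_upper hc hxy X Y
  rw [hmul]
  omega

end Sier

namespace Sier
variable {V : Type*} {G : SimpleGraph V}

lemma dist_cast {n n' : ℕ} (h : n = n') (u v : Fin n → V) :
    (SierpinskiGraph G n).dist u v
      = (SierpinskiGraph G n').dist (fun i => u (Fin.cast h.symm i))
        (fun i => v (Fin.cast h.symm i)) := by
  subst h
  rfl

lemma dist_drop (hc : G.Connected) :
    ∀ (jj n : ℕ) (h : jj ≤ n) (w w' : Fin n → V),
    (∀ i : Fin n, (i : ℕ) < jj → w i = w' i) →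
    (SierpinskiGraph G n).dist w w' = (SierpinskiGraph G (n - jj)).dist
      (fun i => w ⟨jj + i.1, by omega⟩) (fun i => w' ⟨jj + i.1, by omega⟩) := by
  intro jj
  induction jj with
  | zero =>
    intro n h w w' hpre
    have e1 : (fun i : Fin (n - 0) => w ⟨0 + i.1, by omega⟩) = w := by
      funext i
      exact congrArg w (Fin.ext (by simp))
    have e2 : (fun i : Fin (n - 0) => w' ⟨0 + i.1, by omega⟩) = w' := by
      funext i
      exact congrArg w' (Fin.ext (by simp))
    rw [e1, e2]
    rfl
  | succ jj ih =>
    intro n h w w' hpre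
    cases n with
    | zero => omega
    | succ k =>
      have h0 : w 0 = w' 0 := hpre 0 (by simp)
      have hpeel : (SierpinskiGraph G (k+1)).dist w w'
          = (SierpinskiGraph G k).dist (Fin.tail w) (Fin.tail w') := by
        conv_lhs => rw [← Fin.cons_self_tail w, ← Fin.cons_self_tail w', h0]
        exact peel_dist hc (w' 0) _ _
      have htail : ∀ i : Fin k, (i : ℕ) < jj → Fin.tail w i = Fin.tail w' i := by
        intro i hi
        exact hpre i.succ (by simpa using (by omega : (i : ℕ) + 1 < jj + 1))
      rw [hpeel, ih k (by omega) _ _ htail]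
      rw [dist_cast (show k - jj = (k+1) - (jj+1) by omega)]
      congr 1
      · funext i
        show w _ = w _
        exact congrArg w (Fin.ext
          (by simp only [Fin.val_succ, Fin.val_mk, Fin.coe_cast]; omega))
      · funext i
        show w' _ = w' _
        exact congrArg w' (Fin.ext
          (by simp only [Fin.val_succ, Fin.val_mk, Fin.coe_cast]; omega))

end Sier

set_option maxHeartbeats 16000000

/-- for a connected bipartite graph `G`, with `t = j + m` (`j, m ≥ 1`),
`w = z^{j-1} x x_{j+1} ⋯ x_t`, `w' = z^{j-1} y y_{j+1} ⋯ y_t`, `x ≠ y`: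
`d_{S(G,t)}(w,w') = λ(x,y) + (2^{m+1} − 1)·d_G(x,y) − 2(2^m − 1)` where
`λ(x,y) = min_{P_i ∈ 𝒫(x,y)} { d_{S(G,m)}((x^{(i)})^m, x_{j+1}⋯x_t)
  + d_{S(G,m)}((y^{(i)})^m, y_{j+1}⋯y_t) }`. -/
theorem stmt_9 {V : Type*} (G : SimpleGraph V) (hconn : G.Connected)
    (hbip : G.Colorable 2)
    (j m : ℕ) (hj : 1 ≤ j) (hm : 1 ≤ m)
    (x y z : V) (hxy : x ≠ y)
    (w w' : Fin (j + m) → V)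
    (hpre : ∀ i : Fin (j + m), (i : ℕ) < j - 1 → w i = z ∧ w' i = z)
    (hwx : w ⟨j - 1, by omega⟩ = x) (hwy : w' ⟨j - 1, by omega⟩ = y) :
    (SierpinskiGraph G (j + m)).dist w w' =
      sInf { d : ℕ | ∃ q : G.Walk x y, q.IsPath ∧ q.length = G.dist x y ∧
          d = (SierpinskiGraph G m).dist (fun _ => q.getVert 1)
                (fun i : Fin m => w (Fin.natAdd j i))
            + (SierpinskiGraph G m).dist (fun _ => q.getVert (q.length - 1))
                (fun i : Fin m => w' (Fin.natAdd j i)) }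
        + (2 ^ (m + 1) - 1) * G.dist x y - 2 * (2 ^ m - 1) := by
  obtain ⟨C⟩ := hbip
  have hdrop := Sier.dist_drop hconn (j-1) (j+m) (by omega) w w'
    (fun i hi => ((hpre i hi).1).trans ((hpre i hi).2).symm)
  rw [hdrop, Sier.dist_cast (show (j+m) - (j-1) = m + 1 by omega)]
  have e1 : (fun i : Fin (m+1) =>
        (fun i : Fin ((j+m) - (j-1)) => w ⟨(j-1) + i.1, by omega⟩)
          (Fin.cast (show (j+m) - (j-1) = m + 1 by omega).symm i))
      = Fin.cons x (fun i : Fin m => w (Fin.natAdd j i)) := by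
    funext i
    refine Fin.cases ?_ (fun i0 => ?_) i
    · rw [Fin.cons_zero]
      exact (congrArg w (Fin.ext (by simp))).trans hwx
    · rw [Fin.cons_succ]
      exact congrArg w (Fin.ext (by simp [Fin.coe_natAdd]; omega))
  have e2 : (fun i : Fin (m+1) =>
        (fun i : Fin ((j+m) - (j-1)) => w' ⟨(j-1) + i.1, by omega⟩)
          (Fin.cast (show (j+m) - (j-1) = m + 1 by omega).symm i))
      = Fin.cons y (fun i : Fin m => w' (Fin.natAdd j i)) := by
    funext i
    refine Fin.cases ?_ (fun i0 => ?_) i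
    · rw [Fin.cons_zero]
      exact (congrArg w' (Fin.ext (by simp))).trans hwy
    · rw [Fin.cons_succ]
      exact congrArg w' (Fin.ext (by simp [Fin.coe_natAdd]; omega))
  have h3 := congrArg₂ (SierpinskiGraph G (m+1)).dist e1 e2
  rw [h3, Sier.core_cons hconn C hxy]
  rfl
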